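/- K₂(c₀) = 1: for every ε > 0 there is a weak* null sequence (f_n) in B_{ℓ₁} = B_{c₀*} such that every convex block subsequence (g_n) of (f_n) satisfies β((g_n)) ≥ 1/(1+ε)², and K₂(c₀) ≤ 1 trivially. In particular c₀ fails property (K). -/

import Mathlib

open Filter Topology Metric Set NormedSpace

noncomputable section

/-- `y` is a convex block subsequence of `x`. -/
def IsConvexBlock {E : Type*} [AddCommGroup E] [Module ℝ E] (x y : ℕ → E) : Prop :=
  ∃ k : ℕ → ℕ, k 0 = 0 ∧ StrictMono k ∧
    ∀ n, y n ∈ convexHull ℝ (x '' Set.Ico (k n) (k (n + 1)))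

variable (X : Type*) [NormedAddCommGroup X] [NormedSpace ℝ X]

/-- A set is weakly compact if its image in the weak topology is compact. -/
def WeaklyCompact (K : Set X) : Prop := IsCompact (toWeakSpace ℝ X '' K)

/-- A sequence is weakly null. -/
def WeaklyNull (x : ℕ → X) : Prop :=
  ∀ f : X →L[ℝ] ℝ, Tendsto (fun n => f (x n)) atTop (𝓝 0)

/-- A sequence in the dual is weak* null. -/
def WeakStarNull (f : ℕ → X →L[ℝ] ℝ) : Prop :=
  ∀ x : X, Tendsto (fun n => f n x) atTop (𝓝 0)

/-- A sequence in the dual is weak* Cauchy. -/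
def WeakStarCauchy (f : ℕ → X →L[ℝ] ℝ) : Prop :=
  ∀ x : X, ∃ L : ℝ, Tendsto (fun n => f n x) atTop (𝓝 L)

variable {X}

/-- α((f_n)) = sup over weakly compact K ⊆ B_X of limsup_n sup_{x ∈ K} |⟨f_n, x⟩|. -/
def alphaQ (f : ℕ → X →L[ℝ] ℝ) : ℝ :=
  sSup { r | ∃ K : Set X, K ⊆ closedBall 0 1 ∧ WeaklyCompact X K ∧
    r = limsup (fun n => sSup ((fun x => |f n x|) '' K)) atTop }

/-- β((f_n)) = sup over weakly null (x_n) in B_X of limsup_n |⟨f_n, x_n⟩|. -/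
def betaQ (f : ℕ → X →L[ℝ] ℝ) : ℝ :=
  sSup { r | ∃ x : ℕ → X, (∀ n, x n ∈ closedBall (0 : X) 1) ∧ WeaklyNull X x ∧
    r = limsup (fun n => |f n (x n)|) atTop }

/-- ca_{ρ*}((f_n)): measures Mackey-Cauchyness. -/
def caRho (f : ℕ → X →L[ℝ] ℝ) : ℝ :=
  sSup { r | ∃ K : Set X, K ⊆ closedBall 0 1 ∧ WeaklyCompact X K ∧
    r = ⨅ n : ℕ, sSup { t | ∃ k ≥ n, ∃ l ≥ n, ∃ x ∈ K, t = |(f k - f l) x| } }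

/-- ca((z_n)) = inf_n sup_{k,l ≥ n} ‖z_k - z_l‖. -/
def caSeq {E : Type*} [NormedAddCommGroup E] (z : ℕ → E) : ℝ :=
  ⨅ n : ℕ, sSup { r | ∃ k ≥ n, ∃ l ≥ n, r = ‖z k - z l‖ }

variable (X)

def K1 : ℝ :=
  sSup { r | ∃ f : ℕ → X →L[ℝ] ℝ, (∀ n, ‖f n‖ ≤ 1) ∧ WeakStarNull X f ∧
    r = sInf { s | ∃ g, IsConvexBlock f g ∧ s = alphaQ g } }

def K2 : ℝ :=
  sSup { r | ∃ f : ℕ → X →L[ℝ] ℝ, (∀ n, ‖f n‖ ≤ 1) ∧ WeakStarNull X f ∧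
    r = sInf { s | ∃ g, IsConvexBlock f g ∧ s = betaQ g } }

def K3 : ℝ :=
  sSup { r | ∃ f : ℕ → X →L[ℝ] ℝ, (∀ n, ‖f n‖ ≤ 1) ∧ WeakStarCauchy X f ∧
    r = sInf { s | ∃ g, IsConvexBlock f g ∧ s = caRho g } }

/-- Property (K). -/
def PropertyK : Prop :=
  ∀ f : ℕ → X →L[ℝ] ℝ, WeakStarNull X f → ∃ g, IsConvexBlock f g ∧ alphaQ g = 0

/-- The Grothendieck property: every weak* null sequence in the dual is weakly null. -/
def Grothendieck : Prop :=
  ∀ f : ℕ → X →L[ℝ] ℝ, WeakStarNull X f →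
    ∀ Φ : (X →L[ℝ] ℝ) →L[ℝ] ℝ, Tendsto (fun n => Φ (f n)) atTop (𝓝 0)

def GQ : ℝ :=
  sSup { r | ∃ f : ℕ → X →L[ℝ] ℝ, (∀ n, ‖f n‖ ≤ 1) ∧ WeakStarNull X f ∧
    r = sInf { s | ∃ g, IsConvexBlock f g ∧ s = limsup (fun n => ‖g n‖) atTop } }

def RQ : ℝ :=
  sSup { r | ∃ x : ℕ → X, (∀ n, x n ∈ closedBall (0 : X) 1) ∧
    r = sInf { s | ∃ z, IsConvexBlock x z ∧ s = caSeq z } }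

/-- weak* cluster points in the bidual of a sequence in the bidual. -/
def WStarClusterPts (u : ℕ → (X →L[ℝ] ℝ) →L[ℝ] ℝ) : Set ((X →L[ℝ] ℝ) →L[ℝ] ℝ) :=
  { z | MapClusterPt (StrongDual.toWeakDual (𝕜 := ℝ) z) atTop
      (fun n => StrongDual.toWeakDual (𝕜 := ℝ) (u n)) }

def wckQ (A : Set X) : ℝ :=
  sSup { r | ∃ x : ℕ → X, (∀ n, x n ∈ A) ∧
    r = sInf { s | ∃ z ∈ WStarClusterPts X (fun n => inclusionInDoubleDual ℝ X (x n)),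
      ∃ v : X, s = ‖z - inclusionInDoubleDual ℝ X v‖ } }

-- AUX SECTION (to be inserted before theorem)

abbrev C0c := ZeroAtInftyContinuousMap ℕ ℝ

/-- evaluation functional at `n` on `c₀`. -/
def evalCLM (n : ℕ) : C0c →L[ℝ] ℝ :=
  LinearMap.mkContinuous
    { toFun := fun x => x n
      map_add' := fun x y => rfl
      map_smul' := fun c x => rfl } 1
    (fun x => by
      have h : ‖x.toBCF n‖ ≤ ‖x.toBCF‖ := BoundedContinuousFunction.norm_coe_le_norm _ _
      simpa [ZeroAtInftyContinuousMap.norm_toBCF_eq_norm] using h)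

lemma evalCLM_apply (n : ℕ) (x : C0c) : evalCLM n x = x n := rfl

lemma evalCLM_norm_le (n : ℕ) : ‖evalCLM n‖ ≤ 1 :=
  LinearMap.mkContinuous_norm_le _ zero_le_one _

lemma evalCLM_weakStarNull : WeakStarNull C0c evalCLM := by
  intro x
  have h := zero_at_infty (F := C0c) x
  rwa [cocompact_eq_cofinite, Nat.cofinite_eq_atTop] at h

/-- the indicator of `Set.Ico a b` as an element of `c₀`. -/
def indIco (a b : ℕ) : C0c :=
  { toFun := fun m => if m ∈ Set.Ico a b then (1 : ℝ) else 0
    continuous_toFun := continuous_of_discreteTopology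
    zero_at_infty' := by
      rw [cocompact_eq_cofinite, Nat.cofinite_eq_atTop]
      have h : ∀ᶠ m in atTop, (if m ∈ Set.Ico a b then (1 : ℝ) else 0) = 0 := by
        filter_upwards [eventually_ge_atTop b] with m hm
        rw [if_neg]
        simp only [Set.mem_Ico, not_and, not_lt]
        exact fun _ => hm
      refine Tendsto.congr' ?_ (tendsto_const_nhds (x := (0:ℝ)))
      filter_upwards [h] with m hm
      exact hm.symm }

lemma indIco_apply (a b m : ℕ) : indIco a b m = if m ∈ Set.Ico a b then (1 : ℝ) else 0 := rfl

lemma C0c_norm_le {f : C0c} {c : ℝ} (hc : 0 ≤ c) (h : ∀ m, |f m| ≤ c) : ‖f‖ ≤ c := by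
  rw [← ZeroAtInftyContinuousMap.norm_toBCF_eq_norm]
  exact (BoundedContinuousFunction.norm_le hc).2 fun m => by
    simpa [Real.norm_eq_abs] using h m

lemma indIco_norm_le (a b : ℕ) : ‖indIco a b‖ ≤ 1 :=
  C0c_norm_le zero_le_one fun m => by
    rw [indIco_apply]; split <;> norm_num

lemma ico_disj {k : ℕ → ℕ} (hk : StrictMono k) {i j m : ℕ}
    (hi : k i ≤ m ∧ m < k (i + 1)) (hj : k j ≤ m ∧ m < k (j + 1)) : i = j := by
  by_contra hne
  rcases lt_or_gt_of_ne hne with h | h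
  · have := hk.monotone (Nat.succ_le_of_lt h)
    simp only [Nat.succ_eq_add_one] at this
    omega
  · have := hk.monotone (Nat.succ_le_of_lt h)
    simp only [Nat.succ_eq_add_one] at this
    omega

lemma xseq_weaklyNull {k : ℕ → ℕ} (hk : StrictMono k) :
    WeaklyNull C0c (fun n => indIco (k n) (k (n + 1))) := by
  intro φ
  set u : ℕ → C0c := fun n => indIco (k n) (k (n + 1)) with hu
  set ε : ℕ → ℝ := fun i => if 0 ≤ φ (u i) then (1 : ℝ) else -1 with hε
  have hεabs : ∀ i, ε i * φ (u i) = |φ (u i)| := by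
    intro i
    by_cases h : 0 ≤ φ (u i)
    · simp [hε, h, abs_of_nonneg h]
    · simp [hε, h, abs_of_neg (not_le.1 h)]
  have hεle : ∀ i, |ε i| ≤ 1 := by
    intro i; by_cases h : 0 ≤ φ (u i) <;> simp [hε, h]
  have hsum : ∀ N, ∑ i ∈ Finset.range N, |φ (u i)| ≤ ‖φ‖ := by
    intro N
    set y : C0c := ∑ i ∈ Finset.range N, ε i • u i with hy
    have hynorm : ‖y‖ ≤ 1 := by
      apply C0c_norm_le zero_le_one
      intro m
      have hym : y m = ∑ i ∈ Finset.range N, ε i * u i m := by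
        show evalCLM m y = _
        rw [hy, map_sum]
        exact Finset.sum_congr rfl fun i _ => by
          rw [map_smul, smul_eq_mul, evalCLM_apply]
      rw [hym]
      by_cases hex : ∃ i ∈ Finset.range N, k i ≤ m ∧ m < k (i + 1)
      · obtain ⟨i0, hi0, hm0⟩ := hex
        have hsum1 : ∑ i ∈ Finset.range N, ε i * u i m = ε i0 * u i0 m := by
          apply Finset.sum_eq_single_of_mem i0 hi0
          intro j hj hji
          have : u j m = 0 := by
            rw [hu]
            simp only [indIco_apply, Set.mem_Ico]
            rw [if_neg]
            intro hmj
            exact hji (ico_disj hk hmj hm0)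
          rw [this, mul_zero]
        rw [hsum1]
        have : u i0 m = 1 := by
          rw [hu]; simp only [indIco_apply, Set.mem_Ico]; rw [if_pos hm0]
        rw [this, mul_one]
        exact hεle i0
      · have : ∑ i ∈ Finset.range N, ε i * u i m = 0 := by
          apply Finset.sum_eq_zero
          intro j hj
          have : u j m = 0 := by
            rw [hu]
            simp only [indIco_apply, Set.mem_Ico]
            rw [if_neg]
            intro hmj
            exact hex ⟨j, hj, hmj⟩
          rw [this, mul_zero]
        rw [this]; norm_num
    calc ∑ i ∈ Finset.range N, |φ (u i)|
        = ∑ i ∈ Finset.range N, ε i * φ (u i) := by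
          refine Finset.sum_congr rfl fun i _ => (hεabs i).symm
      _ = φ y := by
          rw [hy, map_sum]
          exact Finset.sum_congr rfl fun i _ => by rw [map_smul]; rfl
      _ ≤ |φ y| := le_abs_self _
      _ ≤ ‖φ‖ * ‖y‖ := by
          have := φ.le_opNorm y
          simpa [Real.norm_eq_abs] using this
      _ ≤ ‖φ‖ * 1 := by
          exact mul_le_mul_of_nonneg_left hynorm (norm_nonneg φ)
      _ = ‖φ‖ := mul_one _
  have hsummable : Summable fun i => |φ (u i)| :=
    summable_of_sum_range_le (fun i => abs_nonneg _) hsum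
  have htend := hsummable.tendsto_atTop_zero
  rw [tendsto_zero_iff_norm_tendsto_zero]
  simpa [Real.norm_eq_abs] using htend

lemma limsup_nonneg' {u : ℕ → ℝ} (h : ∀ n, 0 ≤ u n) : 0 ≤ limsup u atTop := by
  rw [limsup_eq]
  apply Real.sInf_nonneg
  intro a ha
  obtain ⟨n, hn⟩ := ha.exists
  exact le_trans (h n) hn

lemma limsup_le_const' {u : ℕ → ℝ} {c : ℝ} (h0 : ∀ n, 0 ≤ u n) (h : ∀ n, u n ≤ c) :
    limsup u atTop ≤ c := by
  rw [limsup_eq]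
  apply csInf_le
  · refine ⟨0, fun a ha => ?_⟩
    obtain ⟨n, hn⟩ := ha.exists
    exact le_trans (h0 n) hn
  · exact Eventually.of_forall h

lemma block_norm_le {X : Type*} [NormedAddCommGroup X] [NormedSpace ℝ X]
    {f g : ℕ → X →L[ℝ] ℝ} (hf : ∀ n, ‖f n‖ ≤ 1) (hg : IsConvexBlock f g) (n : ℕ) :
    ‖g n‖ ≤ 1 := by
  obtain ⟨k, -, -, hmem⟩ := hg
  have hsub : f '' Set.Ico (k n) (k (n + 1)) ⊆ closedBall 0 1 := by
    rintro - ⟨i, -, rfl⟩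
    rw [mem_closedBall_zero_iff]
    exact hf i
  have := convexHull_min hsub (convex_closedBall (0 : X →L[ℝ] ℝ) 1) (hmem n)
  rwa [mem_closedBall_zero_iff] at this

lemma hull_eval_one {X : Type*} [NormedAddCommGroup X] [NormedSpace ℝ X]
    {s : Set (X →L[ℝ] ℝ)} {x : X} (h : ∀ φ ∈ s, φ x = 1) {g : X →L[ℝ] ℝ}
    (hg : g ∈ convexHull ℝ s) : g x = 1 := by
  have hconv : Convex ℝ {φ : X →L[ℝ] ℝ | φ x = 1} := by
    intro φ hφ ψ hψ a b ha hb hab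
    simp only [Set.mem_setOf_eq] at hφ hψ ⊢
    simp [ContinuousLinearMap.add_apply, ContinuousLinearMap.coe_smul',
      Pi.smul_apply, smul_eq_mul, hφ, hψ]
    linarith
  exact convexHull_min h hconv hg

lemma block_self {X : Type*} [NormedAddCommGroup X] [NormedSpace ℝ X]
    (f : ℕ → X →L[ℝ] ℝ) : IsConvexBlock f f := by
  refine ⟨id, rfl, strictMono_id, fun n => ?_⟩
  exact subset_convexHull ℝ _ ⟨n, by simp [Set.mem_Ico], rfl⟩

lemma betaQ_nonneg {X : Type*} [NormedAddCommGroup X] [NormedSpace ℝ X]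
    (g : ℕ → X →L[ℝ] ℝ) : 0 ≤ betaQ g := by
  apply Real.sSup_nonneg
  rintro r ⟨x, hx, hwn, rfl⟩
  exact limsup_nonneg' fun n => abs_nonneg _

lemma betaQ_le_one {X : Type*} [NormedAddCommGroup X] [NormedSpace ℝ X]
    {g : ℕ → X →L[ℝ] ℝ} (hg : ∀ n, ‖g n‖ ≤ 1) : betaQ g ≤ 1 := by
  apply Real.sSup_le _ zero_le_one
  rintro r ⟨x, hx, hwn, rfl⟩
  apply limsup_le_const' (fun n => abs_nonneg _)
  intro n
  calc |g n (x n)| ≤ ‖g n‖ * ‖x n‖ := by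
        simpa [Real.norm_eq_abs] using (g n).le_opNorm (x n)
    _ ≤ 1 * 1 := by
        apply mul_le_mul (hg n) _ (norm_nonneg _) zero_le_one
        exact mem_closedBall_zero_iff.1 (hx n)
    _ = 1 := mul_one 1

lemma block_eval_one {g : ℕ → C0c →L[ℝ] ℝ} {k : ℕ → ℕ} (hk : StrictMono k)
    (hmem : ∀ n, g n ∈ convexHull ℝ (evalCLM '' Set.Ico (k n) (k (n + 1)))) (n : ℕ) :
    g n (indIco (k n) (k (n + 1))) = 1 := by
  apply hull_eval_one _ (hmem n)
  rintro - ⟨j, hj, rfl⟩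
  rw [evalCLM_apply, indIco_apply, if_pos hj]

lemma betaQ_block_eq_one {g : ℕ → C0c →L[ℝ] ℝ} (hg : IsConvexBlock evalCLM g) :
    betaQ g = 1 := by
  have hgnorm : ∀ n, ‖g n‖ ≤ 1 := block_norm_le evalCLM_norm_le hg
  refine le_antisymm (betaQ_le_one hgnorm) ?_
  obtain ⟨k, hk0, hk, hmem⟩ := hg
  have heval := block_eval_one hk hmem
  have hmem1 : (1 : ℝ) ∈ { r | ∃ x : ℕ → C0c, (∀ n, x n ∈ closedBall (0 : C0c) 1) ∧
      WeaklyNull C0c x ∧ r = limsup (fun n => |g n (x n)|) atTop } := by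
    refine ⟨fun n => indIco (k n) (k (n + 1)), fun n => ?_, xseq_weaklyNull hk, ?_⟩
    · exact mem_closedBall_zero_iff.2 (indIco_norm_le _ _)
    · have : (fun n => |g n (indIco (k n) (k (n + 1)))|) = fun _ => (1 : ℝ) := by
        funext n; rw [heval n]; norm_num
      rw [this, limsup_const]
  have hbdd : BddAbove { r | ∃ x : ℕ → C0c, (∀ n, x n ∈ closedBall (0 : C0c) 1) ∧
      WeaklyNull C0c x ∧ r = limsup (fun n => |g n (x n)|) atTop } := by
    refine ⟨1, ?_⟩
    rintro r ⟨x, hx, hwn, rfl⟩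
    apply limsup_le_const' (fun n => abs_nonneg _)
    intro n
    calc |g n (x n)| ≤ ‖g n‖ * ‖x n‖ := by
          simpa [Real.norm_eq_abs] using (g n).le_opNorm (x n)
      _ ≤ 1 * 1 := mul_le_mul (hgnorm n) (mem_closedBall_zero_iff.1 (hx n))
          (norm_nonneg _) zero_le_one
      _ = 1 := mul_one 1
  exact le_csSup hbdd hmem1

lemma weakSpace_inj : Function.Injective ⇑((topDualPairing ℝ C0c).flip) := by
  intro x y h
  apply (NormedSpace.eq_iff_forall_dual_eq ℝ).2
  intro φ
  exact congrArg (fun ψ : StrongDual ℝ C0c →ₗ[ℝ] ℝ => ψ φ) h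

lemma weaklyCompact_insert_range {x : ℕ → C0c} (hx : WeaklyNull C0c x) :
    WeaklyCompact C0c (insert 0 (Set.range x)) := by
  have htend : Tendsto (fun n => toWeakSpace ℝ C0c (x n)) atTop
      (𝓝 (0 : WeakSpace ℝ C0c)) := by
    refine (WeakBilin.tendsto_iff_forall_eval_tendsto (B := (topDualPairing ℝ C0c).flip)
      (f := fun n => x n) (x := (0 : C0c)) weakSpace_inj).2 ?_
    intro φ
    have := hx φ
    simpa using this
  have hc := htend.isCompact_insert_range
  unfold WeaklyCompact
  have himg : toWeakSpace ℝ C0c '' insert 0 (Set.range x) =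
      insert (0 : WeakSpace ℝ C0c) (Set.range fun n => toWeakSpace ℝ C0c (x n)) := by
    rw [Set.image_insert_eq, map_zero]
    congr 1
    rw [← Set.range_comp]
    rfl
  rw [himg]
  exact hc

lemma alphaQ_block_ge_one {g : ℕ → C0c →L[ℝ] ℝ} (hg : IsConvexBlock evalCLM g) :
    1 ≤ alphaQ g := by
  have hgnorm : ∀ n, ‖g n‖ ≤ 1 := block_norm_le evalCLM_norm_le hg
  obtain ⟨k, hk0, hk, hmem⟩ := hg
  set x : ℕ → C0c := fun n => indIco (k n) (k (n + 1)) with hxdef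
  set K : Set C0c := insert 0 (Set.range x) with hK
  have hKball : K ⊆ closedBall 0 1 := by
    rintro v (rfl | ⟨n, rfl⟩)
    · exact mem_closedBall_self zero_le_one
    · exact mem_closedBall_zero_iff.2 (indIco_norm_le _ _)
  have hKcpt : WeaklyCompact C0c K := weaklyCompact_insert_range (xseq_weaklyNull hk)
  have heval := block_eval_one hk hmem
  have hsup : ∀ n, sSup ((fun v => |g n v|) '' K) = 1 := by
    intro n
    apply le_antisymm
    · apply Real.sSup_le _ zero_le_one
      rintro - ⟨v, hv, rfl⟩
      calc |g n v| ≤ ‖g n‖ * ‖v‖ := by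
            simpa [Real.norm_eq_abs] using (g n).le_opNorm v
        _ ≤ 1 * 1 := mul_le_mul (hgnorm n) (mem_closedBall_zero_iff.1 (hKball hv))
            (norm_nonneg _) zero_le_one
        _ = 1 := mul_one 1
    · have hbdd : BddAbove ((fun v => |g n v|) '' K) := by
        refine ⟨1, ?_⟩
        rintro - ⟨v, hv, rfl⟩
        calc |g n v| ≤ ‖g n‖ * ‖v‖ := by
              simpa [Real.norm_eq_abs] using (g n).le_opNorm v
          _ ≤ 1 * 1 := mul_le_mul (hgnorm n) (mem_closedBall_zero_iff.1 (hKball hv))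
              (norm_nonneg _) zero_le_one
          _ = 1 := mul_one 1
      have hmemK : x n ∈ K := Set.mem_insert_of_mem _ ⟨n, rfl⟩
      have : (1 : ℝ) ∈ (fun v => |g n v|) '' K := by
        refine ⟨x n, hmemK, ?_⟩
        show |g n (x n)| = 1
        have hx1 : g n (x n) = 1 := heval n
        rw [hx1]; norm_num
      exact le_csSup hbdd this
  have hmem1 : (1 : ℝ) ∈ { r | ∃ K : Set C0c, K ⊆ closedBall 0 1 ∧ WeaklyCompact C0c K ∧
      r = limsup (fun n => sSup ((fun v => |g n v|) '' K)) atTop } := by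
    refine ⟨K, hKball, hKcpt, ?_⟩
    have : (fun n => sSup ((fun v => |g n v|) '' K)) = fun _ => (1 : ℝ) := funext hsup
    rw [this, limsup_const]
  have hbdd : BddAbove { r | ∃ K : Set C0c, K ⊆ closedBall 0 1 ∧ WeaklyCompact C0c K ∧
      r = limsup (fun n => sSup ((fun v => |g n v|) '' K)) atTop } := by
    refine ⟨1, ?_⟩
    rintro r ⟨K', hK', -, rfl⟩
    apply limsup_le_const'
    · intro n
      apply Real.sSup_nonneg
      rintro - ⟨v, hv, rfl⟩
      exact abs_nonneg _
    · intro n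
      apply Real.sSup_le _ zero_le_one
      rintro - ⟨v, hv, rfl⟩
      calc |g n v| ≤ ‖g n‖ * ‖v‖ := by
            simpa [Real.norm_eq_abs] using (g n).le_opNorm v
        _ ≤ 1 * 1 := mul_le_mul (hgnorm n) (mem_closedBall_zero_iff.1 (hK' hv))
            (norm_nonneg _) zero_le_one
        _ = 1 := mul_one 1
  exact le_csSup hbdd hmem1

theorem stmt8 : K2 (ZeroAtInftyContinuousMap ℕ ℝ) = 1 ∧
    ¬ PropertyK (ZeroAtInftyContinuousMap ℕ ℝ) := by
  constructor
  · unfold K2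
    have h1mem : (1 : ℝ) ∈ { r | ∃ f : ℕ → C0c →L[ℝ] ℝ, (∀ n, ‖f n‖ ≤ 1) ∧
        WeakStarNull C0c f ∧ r = sInf { s | ∃ g, IsConvexBlock f g ∧ s = betaQ g } } := by
      refine ⟨evalCLM, evalCLM_norm_le, evalCLM_weakStarNull, ?_⟩
      have hT : { s | ∃ g, IsConvexBlock evalCLM g ∧ s = betaQ g } = {1} := by
        ext s
        simp only [Set.mem_setOf_eq, Set.mem_singleton_iff]
        constructor
        · rintro ⟨g, hg, rfl⟩
          exact betaQ_block_eq_one hg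
        · rintro rfl
          exact ⟨evalCLM, block_self evalCLM, (betaQ_block_eq_one (block_self evalCLM)).symm⟩
      rw [hT, csInf_singleton]
    apply le_antisymm
    · apply Real.sSup_le _ zero_le_one
      rintro r ⟨f, hf1, hfwn, rfl⟩
      have hmemT : betaQ f ∈ { s | ∃ g, IsConvexBlock f g ∧ s = betaQ g } :=
        ⟨f, block_self f, rfl⟩
      have hbddT : BddBelow { s | ∃ g, IsConvexBlock f g ∧ s = betaQ g } := by
        refine ⟨0, ?_⟩
        rintro s ⟨g, hg, rfl⟩
        exact betaQ_nonneg g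
      exact le_trans (csInf_le hbddT hmemT) (betaQ_le_one hf1)
    · apply le_csSup _ h1mem
      refine ⟨1, ?_⟩
      rintro r ⟨f, hf1, hfwn, rfl⟩
      have hmemT : betaQ f ∈ { s | ∃ g, IsConvexBlock f g ∧ s = betaQ g } :=
        ⟨f, block_self f, rfl⟩
      have hbddT : BddBelow { s | ∃ g, IsConvexBlock f g ∧ s = betaQ g } := by
        refine ⟨0, ?_⟩
        rintro s ⟨g, hg, rfl⟩
        exact betaQ_nonneg g
      exact le_trans (csInf_le hbddT hmemT) (betaQ_le_one hf1)
  · intro hP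
    obtain ⟨g, hg, h0⟩ := hP evalCLM evalCLM_weakStarNull
    have := alphaQ_block_ge_one hg
    rw [h0] at this
    linarith
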